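/- For all n ≥ 5, 312^l_n = (n−1)·(312^l_{n−2} + (n−3)!!) − (n−5)!!·(n−3)(n−2)/2, where 312^l_m denotes the total number of consecutive occurrences of the pattern 312 over all permutations π ∈ Av_m(123,132,321) with π(m−1)=1. -/

import Mathlib

/-- `ConsecOcc p π i`: the word `π(i) π(i+1) … π(i+r-1)` (positions `0`-indexed)
is order-isomorphic to the pattern word `p 0, …, p (r-1)`. -/
def ConsecOcc {n r : ℕ} (p : Fin r → ℕ) (π : Equiv.Perm (Fin n)) (i : ℕ) : Prop :=
  ∃ h : i + r ≤ n, ∀ j k : Fin r,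
    (π ⟨i + j.val, by have := j.isLt; omega⟩ < π ⟨i + k.val, by have := k.isLt; omega⟩
      ↔ p j < p k)

/-- The number of consecutive occurrences of the pattern `p` in `π`. -/
noncomputable def occCount {n r : ℕ} (p : Fin r → ℕ) (π : Equiv.Perm (Fin n)) : ℕ :=
  Nat.card {i : ℕ // ConsecOcc p π i}

/-- `π` has no consecutive occurrence of any pattern in `ps`. -/
def AvoidsAll {n r : ℕ} (ps : List (Fin r → ℕ)) (π : Equiv.Perm (Fin n)) : Prop :=
  ∀ p ∈ ps, ∀ i, ¬ ConsecOcc p π i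

-- Total number of consecutive occurrences of `p` over all size-`n` permutations satisfying `P`.
open scoped Classical in
noncomputable def totOcc {n r : ℕ} (p : Fin r → ℕ) (P : Equiv.Perm (Fin n) → Prop) : ℕ :=
  ∑ π : Equiv.Perm (Fin n), if P π then occCount p π else 0

/-- The number of size-`n` permutations satisfying `P`. -/
noncomputable def classCard (n : ℕ) (P : Equiv.Perm (Fin n) → Prop) : ℕ :=
  Nat.card {π : Equiv.Perm (Fin n) // P π}

def p123 : Fin 3 → ℕ := ![1,2,3]
def p132 : Fin 3 → ℕ := ![1,3,2]
def p213 : Fin 3 → ℕ := ![2,1,3]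
def p231 : Fin 3 → ℕ := ![2,3,1]
def p312 : Fin 3 → ℕ := ![3,1,2]
def p321 : Fin 3 → ℕ := ![3,2,1]

/-- `tl312 m`: total number of consecutive occurrences of `312` over permutations of
`Av_m(123,132,321)` having `1` in the next-to-last position. -/
noncomputable def tl312 (m : ℕ) (hm : 2 ≤ m) : ℕ :=
  totOcc p312 (fun π : Equiv.Perm (Fin m) => AvoidsAll [p123, p132, p321] π
    ∧ π ⟨m - 2, by omega⟩ = ⟨0, by omega⟩)

open Equiv Finset

namespace Av

variable {m : ℕ}

/-- value of `π` at nat index `i` (0 out of range) -/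
def pv (π : Equiv.Perm (Fin m)) (i : ℕ) : ℕ :=
  if h : i < m then (π ⟨i, h⟩).val else 0

lemma pv_eq (π : Equiv.Perm (Fin m)) {i : ℕ} (h : i < m) : pv π i = (π ⟨i, h⟩).val := by
  simp [pv, h]

lemma pv_lt (π : Equiv.Perm (Fin m)) {i : ℕ} (h : i < m) : pv π i < m := by
  rw [pv_eq π h]; exact (π ⟨i, h⟩).isLt

lemma pv_ne (π : Equiv.Perm (Fin m)) {i j : ℕ} (hi : i < m) (hj : j < m) (hij : i ≠ j) :
    pv π i ≠ pv π j := by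
  rw [pv_eq π hi, pv_eq π hj]
  intro h
  exact hij (by simpa using π.injective (Fin.val_injective h))

/-- reformulation of `ConsecOcc` for length-3 patterns via `pv` -/
lemma consec_pv (q : Fin 3 → ℕ) (π : Equiv.Perm (Fin m)) (i : ℕ) :
    ConsecOcc q π i ↔ (i + 3 ≤ m ∧ ∀ j k : Fin 3,
      (pv π (i + j.val) < pv π (i + k.val) ↔ q j < q k)) := by
  unfold ConsecOcc
  constructor
  · rintro ⟨h, H⟩
    refine ⟨h, fun j k => ?_⟩
    have := H j k
    rwa [Fin.lt_def, ← pv_eq π (by have := j.isLt; omega),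
      ← pv_eq π (by have := k.isLt; omega)] at this
  · rintro ⟨h, H⟩
    refine ⟨h, fun j k => ?_⟩
    have := H j k
    rwa [Fin.lt_def, ← pv_eq π (by have := j.isLt; omega),
      ← pv_eq π (by have := k.isLt; omega)]

lemma consec312_iff (π : Equiv.Perm (Fin m)) (i : ℕ) :
    ConsecOcc p312 π i ↔ i + 3 ≤ m ∧ pv π (i+1) < pv π (i+2) ∧ pv π (i+2) < pv π i := by
  rw [consec_pv]
  constructor
  · rintro ⟨h, H⟩
    have h12 := H 1 2
    have h20 := H 2 0
    norm_num [p312, Matrix.cons_val_two] at h12 h20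
    exact ⟨h, h12, by simpa using h20⟩
  · rintro ⟨h, h1, h2⟩
    have d01 := pv_ne π (show i < m by omega) (show i+1 < m by omega) (by omega)
    refine ⟨h, fun j k => ?_⟩
    fin_cases j <;> fin_cases k <;>
      simp [p312] <;> omega

end Av
open Equiv Finset

namespace Av

variable {m : ℕ}

lemma consec123_iff (π : Equiv.Perm (Fin m)) (i : ℕ) :
    ConsecOcc p123 π i ↔ i + 3 ≤ m ∧ pv π i < pv π (i+1) ∧ pv π (i+1) < pv π (i+2) := by
  rw [consec_pv]
  constructor
  · rintro ⟨h, H⟩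
    have h01 := H 0 1
    have h12 := H 1 2
    norm_num [p123, Matrix.cons_val_two] at h01 h12
    exact ⟨h, by simpa using h01, h12⟩
  · rintro ⟨h, h1, h2⟩
    refine ⟨h, fun j k => ?_⟩
    fin_cases j <;> fin_cases k <;> simp [p123] <;> omega

lemma consec132_iff (π : Equiv.Perm (Fin m)) (i : ℕ) :
    ConsecOcc p132 π i ↔ i + 3 ≤ m ∧ pv π i < pv π (i+2) ∧ pv π (i+2) < pv π (i+1) := by
  rw [consec_pv]
  constructor
  · rintro ⟨h, H⟩
    have h02 := H 0 2
    have h21 := H 2 1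
    norm_num [p132, Matrix.cons_val_two] at h02 h21
    exact ⟨h, by simpa using h02, h21⟩
  · rintro ⟨h, h1, h2⟩
    refine ⟨h, fun j k => ?_⟩
    fin_cases j <;> fin_cases k <;> simp [p132] <;> omega

lemma consec321_iff (π : Equiv.Perm (Fin m)) (i : ℕ) :
    ConsecOcc p321 π i ↔ i + 3 ≤ m ∧ pv π (i+2) < pv π (i+1) ∧ pv π (i+1) < pv π i := by
  rw [consec_pv]
  constructor
  · rintro ⟨h, H⟩
    have h21 := H 2 1
    have h10 := H 1 0
    norm_num [p321, Matrix.cons_val_two] at h21 h10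
    exact ⟨h, h21, by simpa using h10⟩
  · rintro ⟨h, h1, h2⟩
    refine ⟨h, fun j k => ?_⟩
    fin_cases j <;> fin_cases k <;> simp [p321] <;> omega

/-- Characterization of avoidance of {123,132,321}. -/
lemma avoids_iff (π : Equiv.Perm (Fin m)) :
    AvoidsAll [p123, p132, p321] π ↔ ∀ i, i + 3 ≤ m →
      ((pv π (i+1) < pv π i → pv π (i+1) < pv π (i+2)) ∧
       (pv π i < pv π (i+1) → pv π (i+2) < pv π i)) := by
  constructor
  · intro H i hi
    have h1 := H p123 (by simp) i
    have h2 := H p132 (by simp) i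
    have h3 := H p321 (by simp) i
    rw [consec123_iff] at h1
    rw [consec132_iff] at h2
    rw [consec321_iff] at h3
    have d01 := pv_ne π (show i < m by omega) (show i+1 < m by omega) (by omega)
    have d12 := pv_ne π (show i+1 < m by omega) (show i+2 < m by omega) (by omega)
    have d02 := pv_ne π (show i < m by omega) (show i+2 < m by omega) (by omega)
    omega
  · intro H p hp i
    have := fun h : i + 3 ≤ m => H i h
    fin_cases hp <;>
      [rw [consec123_iff]; rw [consec132_iff]; rw [consec321_iff]] <;>
      (intro h; have := H i h.1; omega)

end Av
open Equiv Finset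

namespace Av

variable {m : ℕ}

/-- steps alternate, anchored at the ascent into the last position -/
lemma alt (π : Equiv.Perm (Fin m)) (hm : 2 ≤ m) (hA : AvoidsAll [p123, p132, p321] π)
    (h0 : pv π (m-2) = 0) :
    ∀ d, d ≤ m - 2 →
      (d % 2 = 0 → pv π (m-2-d) < pv π (m-2-d+1)) ∧
      (d % 2 = 1 → pv π (m-2-d+1) < pv π (m-2-d)) := by
  intro d
  induction d with
  | zero =>
    intro _
    have e : m - 2 - 0 = m - 2 := by omega
    have e2 : m - 2 + 1 = m - 1 := by omega
    rw [e, e2]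
    have hne := pv_ne π (show m-1 < m by omega) (show m-2 < m by omega) (by omega)
    omega
  | succ d ih =>
    intro hd
    have IH := ih (by omega)
    obtain ⟨i, hi⟩ : ∃ i, m - 2 - (d+1) = i := ⟨_, rfl⟩
    have e1 : m - 2 - d = i + 1 := by omega
    have e2 : m - 2 - d + 1 = i + 2 := by omega
    rw [e2, e1] at IH
    rw [hi]
    have hA' := (avoids_iff π).mp hA i (by omega)
    have d01 := pv_ne π (show i < m by omega) (show i+1 < m by omega) (by omega)
    have d12 := pv_ne π (show i+1 < m by omega) (show i+2 < m by omega) (by omega)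
    omega

/-- the values at the "low" positions decrease towards position `m-4`. -/
lemma chain (π : Equiv.Perm (Fin m)) (hm : 4 ≤ m) (hA : AvoidsAll [p123, p132, p321] π)
    (h0 : pv π (m-2) = 0) :
    ∀ t, 2*t + 4 ≤ m → pv π (m-4) ≤ pv π (m-4-2*t) := by
  intro t
  induction t with
  | zero => intro _; simp
  | succ t ih =>
    intro ht
    have IH := ih (by omega)
    obtain ⟨j, hj⟩ : ∃ j, m - 4 - 2*(t+1) = j := ⟨_, rfl⟩
    have ha := (alt π (by omega) hA h0 (2*t+4) (by omega)).1 (by omega)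
    have e1 : m - 2 - (2*t+4) = j := by omega
    have e2 : m - 2 - (2*t+4) + 1 = j + 1 := by omega
    rw [e2, e1] at ha
    have hA' := ((avoids_iff π).mp hA j (by omega)).2 ha
    have e3 : m - 4 - 2*t = j + 2 := by omega
    rw [e3] at IH
    rw [hj]
    omega

/-- position `m-4` holds the minimum among the first `m-2` values. -/
lemma minpos (π : Equiv.Perm (Fin m)) (hm : 4 ≤ m) (hA : AvoidsAll [p123, p132, p321] π)
    (h0 : pv π (m-2) = 0) :
    ∀ i, i + 3 ≤ m → i ≠ m - 4 → pv π (m-4) < pv π i := by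
  intro i hi hne
  have hlt := pv_ne π (show m-4 < m by omega) (show i < m by omega) (by omega)
  by_cases hp : (m - i) % 2 = 0
  · -- low position: i ≤ m-6
    have h6 : i + 6 ≤ m := by omega
    obtain ⟨t, ht⟩ : ∃ t, i = m - 4 - 2*t ∧ 2*t + 4 ≤ m := ⟨(m-4-i)/2, by omega⟩
    have := chain π hm hA h0 t ht.2
    rw [← ht.1] at this
    omega
  · by_cases hlast : i = m - 3
    · have ha := (alt π (by omega) hA h0 2 (by omega)).1 (by omega)
      have e1 : m - 2 - 2 = m - 4 := by omega
      have e2 : m - 2 - 2 + 1 = m - 3 := by omega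
      rw [e2, e1] at ha
      rw [hlast]
      exact ha
    · -- high position, i ≤ m-5 : descent at i, then chain from i+1
      have h5 : i + 5 ≤ m := by omega
      have hd := (alt π (by omega) hA h0 (m-2-i) (by omega)).2 (by omega)
      have e1 : m - 2 - (m-2-i) = i := by omega
      have e2 : m - 2 - (m-2-i) + 1 = i + 1 := by omega
      rw [e2, e1] at hd
      obtain ⟨t, ht⟩ : ∃ t, i + 1 = m - 4 - 2*t ∧ 2*t + 4 ≤ m := ⟨(m-4-(i+1))/2, by omega⟩
      have := chain π hm hA h0 t ht.2
      rw [← ht.1] at this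
      omega

end Av
open Equiv Finset

namespace Av

variable {k : ℕ}

/-- value relabeling `{0,…,k-1} → {1,…,k+1}\{v}` (order embedding) -/
def iv (v : ℕ) (x : ℕ) : ℕ := if x + 1 < v then x + 1 else x + 2

lemma iv_lt_iv {v x y : ℕ} : iv v x < iv v y ↔ x < y := by
  unfold iv; split <;> split <;> omega

lemma iv_pos (v x : ℕ) : 1 ≤ iv v x := by unfold iv; split <;> omega

lemma iv_ne (v x : ℕ) (hv : 1 ≤ v) : iv v x ≠ v := by unfold iv; split <;> omega

lemma iv_le (v x : ℕ) (hx : x < k) : iv v x ≤ k + 1 := by unfold iv; split <;> omega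

lemma iv_gt_iff {v x : ℕ} (hv : 1 ≤ v) : v < iv v x ↔ v ≤ x + 1 := by
  unfold iv; split <;> omega

def InsFun (v : ℕ) (σ : Equiv.Perm (Fin k)) : Fin (k+2) → Fin (k+2) :=
  fun i => if h : i.val < k then
      ⟨iv v (σ ⟨i.val, h⟩).val, by
        have := (σ ⟨i.val, h⟩).isLt; unfold iv; split <;> omega⟩
    else if i.val = k then ⟨0, by omega⟩ else ⟨v % (k+2), Nat.mod_lt _ (by omega)⟩

lemma InsFun_val (v : ℕ) (hv2 : v ≤ k + 1) (σ : Equiv.Perm (Fin k)) (x : Fin (k+2)) :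
    (InsFun v σ x).val =
      if h : x.val < k then iv v ((σ ⟨x.val, h⟩).val) else if x.val = k then 0 else v := by
  by_cases h : x.val < k
  · simp [InsFun, h]
  · by_cases h2 : x.val = k
    · simp [InsFun, h, h2]
    · simp [InsFun, h, h2, Nat.mod_eq_of_lt (show v < k+2 by omega)]

lemma InsFun_inj (v : ℕ) (hv1 : 1 ≤ v) (hv2 : v ≤ k + 1) (σ : Equiv.Perm (Fin k)) :
    Function.Injective (InsFun v σ) := by
  intro a b hab
  have h := congrArg Fin.val hab
  rw [InsFun_val v hv2, InsFun_val v hv2] at h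
  apply Fin.val_injective
  show a.val = b.val
  by_cases ha : a.val < k <;> by_cases hb : b.val < k
  · rw [dif_pos ha, dif_pos hb] at h
    have h1 := iv_lt_iv (v := v) (x := (σ ⟨a.val, ha⟩).val) (y := (σ ⟨b.val, hb⟩).val)
    have h2 := iv_lt_iv (v := v) (x := (σ ⟨b.val, hb⟩).val) (y := (σ ⟨a.val, ha⟩).val)
    have hσ : (σ ⟨a.val, ha⟩).val = (σ ⟨b.val, hb⟩).val := by omega
    have := σ.injective (Fin.val_injective hσ)
    simpa using congrArg Fin.val this
  · exfalso
    rw [dif_pos ha, dif_neg hb] at h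
    have h1 := iv_pos v (σ ⟨a.val, ha⟩).val
    have h2 := iv_ne v (σ ⟨a.val, ha⟩).val hv1
    by_cases hb2 : b.val = k
    · rw [if_pos hb2] at h; omega
    · rw [if_neg hb2] at h; omega
  · exfalso
    rw [dif_neg ha, dif_pos hb] at h
    have h1 := iv_pos v (σ ⟨b.val, hb⟩).val
    have h2 := iv_ne v (σ ⟨b.val, hb⟩).val hv1
    by_cases ha2 : a.val = k
    · rw [if_pos ha2] at h; omega
    · rw [if_neg ha2] at h; omega
  · rw [dif_neg ha, dif_neg hb] at h
    have hav := a.isLt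
    have hbv := b.isLt
    by_cases ha2 : a.val = k <;> by_cases hb2 : b.val = k <;>
      simp only [ha2, hb2, if_pos, if_neg, if_true, if_false] at h <;> omega

noncomputable def Ins (v : ℕ) (hv1 : 1 ≤ v) (hv2 : v ≤ k + 1) (σ : Equiv.Perm (Fin k)) :
    Equiv.Perm (Fin (k+2)) :=
  Equiv.ofBijective (InsFun v σ) (Finite.injective_iff_bijective.mp (InsFun_inj v hv1 hv2 σ))

lemma pv_Ins_lt (v : ℕ) (hv1 : 1 ≤ v) (hv2 : v ≤ k + 1) (σ : Equiv.Perm (Fin k))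
    {i : ℕ} (hi : i < k) : pv (Ins v hv1 hv2 σ) i = iv v (pv σ i) := by
  rw [pv_eq _ (show i < k + 2 by omega), pv_eq σ hi]
  show (InsFun v σ ⟨i, _⟩).val = _
  unfold InsFun
  simp only [hi, dif_pos]

lemma pv_Ins_k (v : ℕ) (hv1 : 1 ≤ v) (hv2 : v ≤ k + 1) (σ : Equiv.Perm (Fin k)) :
    pv (Ins v hv1 hv2 σ) k = 0 := by
  rw [pv_eq _ (show k < k + 2 by omega)]
  show (InsFun v σ ⟨k, _⟩).val = 0
  unfold InsFun
  simp

lemma pv_Ins_top (v : ℕ) (hv1 : 1 ≤ v) (hv2 : v ≤ k + 1) (σ : Equiv.Perm (Fin k)) :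
    pv (Ins v hv1 hv2 σ) (k+1) = v := by
  rw [pv_eq _ (show k+1 < k + 2 by omega)]
  show (InsFun v σ ⟨k+1, _⟩).val = v
  unfold InsFun
  simp only [dif_neg (by omega : ¬ (k+1 < k)), if_neg (by omega : ¬ (k+1 = k))]
  exact Nat.mod_eq_of_lt (by omega)

end Av
open Equiv Finset

namespace Av

variable {k : ℕ}

open scoped Classical

def CmP {m : ℕ} (π : Equiv.Perm (Fin m)) : Prop :=
  AvoidsAll [p123, p132, p321] π ∧ pv π (m-2) = 0

lemma CmP_iff {m : ℕ} (hm : 2 ≤ m) (π : Equiv.Perm (Fin m)) :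
    (AvoidsAll [p123, p132, p321] π ∧ π ⟨m-2, by omega⟩ = ⟨0, by omega⟩) ↔ CmP π := by
  unfold CmP
  have : (π ⟨m-2, by omega⟩ = ⟨0, by omega⟩) ↔ pv π (m-2) = 0 := by
    rw [pv_eq π (show m - 2 < m by omega), Fin.ext_iff]
  rw [this]

lemma mem_forward (hk : 2 ≤ k) (v : ℕ) (hv1 : 1 ≤ v) (hv2 : v ≤ k + 1)
    (σ : Equiv.Perm (Fin k)) (hσ : CmP σ) : CmP (Ins v hv1 hv2 σ) := by
  obtain ⟨hA, h0⟩ := hσ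
  constructor
  · rw [avoids_iff]
    intro i hi
    by_cases h1 : i + 3 ≤ k
    · rw [pv_Ins_lt v hv1 hv2 σ (show i < k by omega),
        pv_Ins_lt v hv1 hv2 σ (show i+1 < k by omega),
        pv_Ins_lt v hv1 hv2 σ (show i+2 < k by omega)]
      simp only [iv_lt_iv]
      exact (avoids_iff σ).mp hA i h1
    · by_cases h2 : i + 3 = k + 1
      · -- i = k - 2
        obtain ⟨rfl⟩ : k = i + 2 := by omega
        rw [pv_Ins_lt v hv1 hv2 σ (show i < i+2 by omega),
          pv_Ins_lt v hv1 hv2 σ (show i+1 < i+2 by omega),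
          pv_Ins_k v hv1 hv2 σ]
        have h0' : pv σ i = 0 := by simpa using h0
        have hne : pv σ (i+1) ≠ pv σ i :=
          pv_ne σ (by omega) (by omega) (by omega)
        have hmono : iv v (pv σ i) < iv v (pv σ (i+1)) := iv_lt_iv.mpr (by omega)
        have hpos := iv_pos v (pv σ i)
        omega
      · -- i = k - 1
        obtain ⟨rfl⟩ : k = i + 1 := by omega
        rw [pv_Ins_lt v hv1 hv2 σ (show i < i+1 by omega)]
        have e : i + 2 = (i+1) + 1 := by omega
        rw [e, pv_Ins_top v hv1 hv2 σ]
        have e2 : i + 1 = (i+1) := rfl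
        rw [pv_Ins_k v hv1 hv2 σ]
        have hpos := iv_pos v (pv σ i)
        omega
  · show pv _ (k + 2 - 2) = 0
    rw [Nat.add_sub_cancel]
    exact pv_Ins_k v hv1 hv2 σ

lemma occ_Ins_iff (hk : 2 ≤ k) (v : ℕ) (hv1 : 1 ≤ v) (hv2 : v ≤ k + 1)
    (σ : Equiv.Perm (Fin k)) (i : ℕ) :
    ConsecOcc p312 (Ins v hv1 hv2 σ) i ↔
      (ConsecOcc p312 σ i ∨ (i = k - 1 ∧ v ≤ pv σ (k-1) + 1)) := by
  rw [consec312_iff, consec312_iff]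
  by_cases h1 : i + 3 ≤ k
  · rw [pv_Ins_lt v hv1 hv2 σ (show i < k by omega),
      pv_Ins_lt v hv1 hv2 σ (show i+1 < k by omega),
      pv_Ins_lt v hv1 hv2 σ (show i+2 < k by omega)]
    simp only [iv_lt_iv]
    constructor
    · rintro ⟨_, h⟩; exact Or.inl ⟨h1, h⟩
    · rintro (⟨_, h⟩ | ⟨hik, _⟩)
      · exact ⟨by omega, h⟩
      · omega
  · by_cases h2 : i + 3 = k + 1
    · obtain ⟨rfl⟩ : k = i + 2 := by omega
      rw [pv_Ins_lt v hv1 hv2 σ (show i+1 < i+2 by omega), pv_Ins_k v hv1 hv2 σ]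
      constructor
      · rintro ⟨_, h, _⟩; omega
      · rintro (⟨h, _⟩ | ⟨hik, _⟩) <;> omega
    · by_cases h3 : i + 3 = k + 2
      · obtain ⟨rfl⟩ : k = i + 1 := by omega
        rw [pv_Ins_lt v hv1 hv2 σ (show i < i+1 by omega)]
        have e : i + 2 = (i+1) + 1 := by omega
        rw [e, pv_Ins_top v hv1 hv2 σ, pv_Ins_k v hv1 hv2 σ]
        have hiv := iv_gt_iff (x := pv σ i) hv1
        have e2 : i + 1 - 1 = i := by omega
        rw [e2]
        constructor
        · rintro ⟨_, _, h⟩; exact Or.inr ⟨rfl, by omega⟩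
        · rintro (⟨h, _⟩ | ⟨_, h⟩)
          · omega
          · exact ⟨by omega, by omega, by omega⟩
      · constructor
        · rintro ⟨h, _⟩; omega
        · rintro (⟨h, _⟩ | ⟨hik, _⟩) <;> omega

lemma occCount_eq {m : ℕ} (p : Fin 3 → ℕ) (π : Equiv.Perm (Fin m)) :
    occCount p π = ((Finset.range m).filter (fun i => ConsecOcc p π i)).card := by
  have hs : {i : ℕ | ConsecOcc p π i} =
      ↑((Finset.range m).filter (fun i => ConsecOcc p π i)) := by
    ext i
    simp only [Set.mem_setOf_eq, coe_filter, mem_range, Set.mem_setOf_eq]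
    refine ⟨fun h => ⟨?_, h⟩, fun h => h.2⟩
    obtain ⟨hle, _⟩ := h
    omega
  calc occCount p π = {i : ℕ | ConsecOcc p π i}.ncard := Nat.card_coe_set_eq _
    _ = _ := by rw [hs, Set.ncard_coe_finset]

lemma occCount_Ins (hk : 2 ≤ k) (v : ℕ) (hv1 : 1 ≤ v) (hv2 : v ≤ k + 1)
    (σ : Equiv.Perm (Fin k)) :
    occCount p312 (Ins v hv1 hv2 σ) =
      occCount p312 σ + if v ≤ pv σ (k-1) + 1 then 1 else 0 := by
  have key : ∀ i, ConsecOcc p312 σ i → i + 3 ≤ k := by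
    intro i hi; exact ((consec312_iff σ i).mp hi).1
  rw [occCount_eq, occCount_eq]
  by_cases hcond : v ≤ pv σ (k-1) + 1
  · rw [if_pos hcond]
    have hfil : (range (k+2)).filter (fun i => ConsecOcc p312 (Ins v hv1 hv2 σ) i)
        = insert (k-1) ((range k).filter (fun i => ConsecOcc p312 σ i)) := by
      ext i
      simp only [mem_filter, mem_range, mem_insert, occ_Ins_iff hk v hv1 hv2 σ]
      constructor
      · rintro ⟨hi, hocc | ⟨rfl, _⟩⟩
        · exact Or.inr ⟨by have := key i hocc; omega, hocc⟩
        · exact Or.inl rfl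
      · rintro (rfl | ⟨hik, hocc⟩)
        · exact ⟨by omega, Or.inr ⟨rfl, hcond⟩⟩
        · exact ⟨by omega, Or.inl hocc⟩
    rw [hfil, card_insert_of_notMem]
    simp only [mem_filter, mem_range, not_and]
    intro _ hocc
    have := key _ hocc
    omega
  · rw [if_neg hcond, add_zero]
    congr 1
    ext i
    simp only [mem_filter, mem_range, occ_Ins_iff hk v hv1 hv2 σ]
    constructor
    · rintro ⟨hi, hocc | ⟨rfl, hc⟩⟩
      · exact ⟨by have := key i hocc; omega, hocc⟩
      · exact absurd hc hcond
    · rintro ⟨hik, hocc⟩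
      exact ⟨by omega, Or.inl hocc⟩

end Av
open Equiv Finset

namespace Av

variable {k : ℕ}

def dl (v y : ℕ) : ℕ := if y < v then y - 1 else y - 2

lemma dl_lt {v y : ℕ} (h0 : y ≠ 0) (hv : y ≠ v) (hy : y ≤ k + 1)
    (hv1 : 1 ≤ v) (hv2 : v ≤ k + 1) : dl v y < k := by
  unfold dl; split <;> omega

lemma iv_dl (v y : ℕ) (h0 : y ≠ 0) (hv : y ≠ v) (hv1 : 1 ≤ v) : iv v (dl v y) = y := by
  unfold iv dl; split <;> split <;> omega

lemma surj (hk : 2 ≤ k) (π : Equiv.Perm (Fin (k+2))) (hπ : CmP π) :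
    ∃ v, ∃ hv1 : 1 ≤ v, ∃ hv2 : v ≤ k + 1, ∃ σ : Equiv.Perm (Fin k),
      CmP σ ∧ Ins v hv1 hv2 σ = π := by
  obtain ⟨hA, h0⟩ := hπ
  have h0' : pv π k = 0 := by
    have e : k + 2 - 2 = k := by omega
    rwa [e] at h0
  set v := pv π (k+1) with hvdef
  have hv1 : 1 ≤ v := by
    have := pv_ne π (show k+1 < k+2 by omega) (show k < k+2 by omega) (by omega)
    omega
  have hv2 : v ≤ k + 1 := by
    have := pv_lt π (show k+1 < k+2 by omega)
    omega
  have hne0 : ∀ i, i < k → pv π i ≠ 0 := by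
    intro i hi
    have := pv_ne π (show i < k+2 by omega) (show k < k+2 by omega) (by omega)
    omega
  have hnev : ∀ i, i < k → pv π i ≠ v := by
    intro i hi
    exact pv_ne π (show i < k+2 by omega) (show k+1 < k+2 by omega) (by omega)
  have hle : ∀ i, i < k → pv π i ≤ k + 1 := by
    intro i hi
    have := pv_lt π (show i < k+2 by omega)
    omega
  have hval : ∀ i : Fin k, dl v (pv π i.val) < k :=
    fun i => dl_lt (hne0 _ i.isLt) (hnev _ i.isLt) (hle _ i.isLt) hv1 hv2
  set DelFun : Fin k → Fin k := fun i => ⟨dl v (pv π i.val), hval i⟩ with hDel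
  have hDinj : Function.Injective DelFun := by
    intro a b hab
    have h := congrArg Fin.val hab
    simp only [hDel] at h
    have ha := iv_dl v (pv π a.val) (hne0 _ a.isLt) (hnev _ a.isLt) hv1
    have hb := iv_dl v (pv π b.val) (hne0 _ b.isLt) (hnev _ b.isLt) hv1
    have hpv : pv π a.val = pv π b.val := by rw [← ha, ← hb, h]
    by_contra hne
    exact pv_ne π (show a.val < k+2 by omega) (show b.val < k+2 by omega)
      (fun hh => hne (Fin.val_injective hh)) hpv
  set σ : Equiv.Perm (Fin k) :=
    Equiv.ofBijective DelFun (Finite.injective_iff_bijective.mp hDinj) with hσ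
  have hσval : ∀ i, (hi : i < k) → pv σ i = dl v (pv π i) := by
    intro i hi
    rw [pv_eq σ hi]
    rfl
  have hcmp : ∀ a b : ℕ, a < k → b < k → (pv σ a < pv σ b ↔ pv π a < pv π b) := by
    intro a b ha hb
    rw [hσval a ha, hσval b hb]
    have ia := iv_dl v (pv π a) (hne0 _ ha) (hnev _ ha) hv1
    have ib := iv_dl v (pv π b) (hne0 _ hb) (hnev _ hb) hv1
    constructor
    · intro h
      have := (iv_lt_iv (v := v)).mpr h
      rwa [ia, ib] at this
    · intro h
      apply (iv_lt_iv (v := v)).mp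
      rw [ia, ib]
      exact h
  refine ⟨v, hv1, hv2, σ, ⟨?_, ?_⟩, ?_⟩
  · -- avoidance of σ
    rw [avoids_iff]
    intro i hi
    have hπc := (avoids_iff π).mp hA i (by omega)
    rw [hcmp (i+1) i (by omega) (by omega), hcmp (i+1) (i+2) (by omega) (by omega),
      hcmp i (i+1) (by omega) (by omega), hcmp (i+2) i (by omega) (by omega)]
    exact hπc
  · -- σ has min at position k-2
    have hmin := minpos π (show 4 ≤ k+2 by omega) hA h0
    have e4 : k + 2 - 4 = k - 2 := by omega
    rw [e4] at hmin
    set w : ℕ := if v = 1 then 2 else 1 with hw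
    have hwne0 : w ≠ 0 := by rw [hw]; split <;> omega
    have hwnev : w ≠ v := by rw [hw]; split <;> omega
    have hwlt : w < k + 2 := by rw [hw]; split <;> omega
    set q := π.symm ⟨w, hwlt⟩ with hq
    have hπq : pv π q.val = w := by
      rw [pv_eq π q.isLt]
      have : π q = ⟨w, hwlt⟩ := by rw [hq]; exact π.apply_symm_apply _
      rw [show (⟨q.val, q.isLt⟩ : Fin (k+2)) = q from Fin.eta q q.isLt, this]
    have hqk : q.val ≠ k := by
      intro hh
      rw [hh, h0'] at hπq
      exact hwne0 hπq.symm
    have hqk1 : q.val ≠ k + 1 := by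
      intro hh
      rw [hh, ← hvdef] at hπq
      exact hwnev hπq.symm
    have hqlt : q.val < k := by have := q.isLt; omega
    -- the minimum value μ at position k-2
    have hμne0 : pv π (k-2) ≠ 0 := hne0 _ (by omega)
    have hμnev : pv π (k-2) ≠ v := hnev _ (by omega)
    have hqeq : q.val = k - 2 := by
      by_contra hne
      have := hmin q.val (by omega) (by omega)
      rw [hπq] at this
      -- pv π (k-2) < w, pv π (k-2) ≠ 0, ≠ v ; w is 1 or 2 (=2 only if v=1)
      rw [hw] at this
      split at this <;> omega
    have hμ : pv π (k-2) = w := by rw [← hqeq, hπq]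
    show pv σ (k - 2) = 0
    rw [hσval (k-2) (by omega), hμ, hw]
    unfold dl
    split <;> split <;> omega
  · -- Ins v σ = π
    apply Equiv.ext
    intro x
    apply Fin.val_injective
    show (InsFun v σ x).val = (π x).val
    rw [InsFun_val v hv2 σ x]
    by_cases hx : x.val < k
    · rw [dif_pos hx]
      have : (σ ⟨x.val, hx⟩).val = dl v (pv π x.val) := rfl
      rw [this, iv_dl v (pv π x.val) (hne0 _ hx) (hnev _ hx) hv1, pv_eq π x.isLt,
        Fin.eta]
    · rw [dif_neg hx]
      by_cases hx2 : x.val = k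
      · rw [if_pos hx2]
        have : x = ⟨k, by omega⟩ := Fin.val_injective hx2
        rw [this]
        rw [pv_eq π (show k < k+2 by omega)] at h0'
        exact h0'.symm
      · rw [if_neg hx2]
        have hx3 : x.val = k + 1 := by have := x.isLt; omega
        have : x = ⟨k+1, by omega⟩ := Fin.val_injective hx3
        rw [this, hvdef, pv_eq π (show k+1 < k+2 by omega)]

end Av
open Equiv Finset

namespace Av

open scoped Classical

variable {k : ℕ}

/-- total version of `Ins` -/
noncomputable def InsT (v : ℕ) (σ : Equiv.Perm (Fin k)) : Equiv.Perm (Fin (k+2)) :=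
  if h : 1 ≤ v ∧ v ≤ k + 1 then Ins v h.1 h.2 σ else 1

lemma InsT_eq (v : ℕ) (hv1 : 1 ≤ v) (hv2 : v ≤ k + 1) (σ : Equiv.Perm (Fin k)) :
    InsT v σ = Ins v hv1 hv2 σ := by
  rw [InsT, dif_pos ⟨hv1, hv2⟩]

/-- The master bijection sum transfer. -/
lemma master (hk : 2 ≤ k) (w : Equiv.Perm (Fin (k+2)) → ℕ) :
    ∑ π : Equiv.Perm (Fin (k+2)), (if CmP π then w π else 0)
    = ∑ v ∈ Finset.Icc 1 (k+1), ∑ σ : Equiv.Perm (Fin k),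
        (if CmP σ then w (InsT v σ) else 0) := by
  rw [← Finset.sum_filter]
  have hr : ∀ v ∈ Finset.Icc 1 (k+1),
      (∑ σ : Equiv.Perm (Fin k), if CmP σ then w (InsT v σ) else 0)
      = ∑ σ ∈ Finset.univ.filter (fun σ : Equiv.Perm (Fin k) => CmP σ), w (InsT v σ) :=
    fun v _ => (Finset.sum_filter _ _).symm
  rw [Finset.sum_congr rfl hr, ← Finset.sum_product']
  refine (Finset.sum_bij (fun p hp => InsT p.1 p.2) ?_ ?_ ?_ ?_).symm
  · rintro ⟨v, σ⟩ hp
    simp only [Finset.mem_product, Finset.mem_Icc, Finset.mem_filter] at hp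
    obtain ⟨⟨hv1, hv2⟩, _, hσ⟩ := hp
    show InsT v σ ∈ _
    rw [InsT_eq v hv1 hv2 σ]
    simp only [Finset.mem_filter, Finset.mem_univ, true_and]
    exact mem_forward hk v hv1 hv2 σ hσ
  · rintro ⟨v, σ⟩ hp ⟨v', σ'⟩ hp' heq
    simp only [Finset.mem_product, Finset.mem_Icc, Finset.mem_filter] at hp hp'
    obtain ⟨⟨hv1, hv2⟩, _, hσ⟩ := hp
    obtain ⟨⟨hv1', hv2'⟩, _, hσ'⟩ := hp'
    replace heq : InsT v σ = InsT v' σ' := heq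
    rw [InsT_eq v hv1 hv2 σ, InsT_eq v' hv1' hv2' σ'] at heq
    have hv : v = v' := by
      have h1 := pv_Ins_top v hv1 hv2 σ
      have h2 := pv_Ins_top v' hv1' hv2' σ'
      rw [← heq] at h2
      rw [← h1, ← h2]
    subst hv
    have hσeq : σ = σ' := by
      apply Equiv.ext
      intro x
      apply Fin.val_injective
      have h1 := pv_Ins_lt v hv1 hv2 σ x.isLt
      have h2 := pv_Ins_lt v hv1' hv2' σ' x.isLt
      rw [← heq] at h2
      have hiv : iv v (pv σ x.val) = iv v (pv σ' x.val) := by rw [← h1, ← h2]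
      have := (iv_lt_iv (v := v) (x := pv σ x.val) (y := pv σ' x.val))
      have := (iv_lt_iv (v := v) (x := pv σ' x.val) (y := pv σ x.val))
      have hpv : pv σ x.val = pv σ' x.val := by omega
      rw [pv_eq σ x.isLt, pv_eq σ' x.isLt] at hpv
      simpa [Fin.eta] using hpv
    rw [hσeq]
  · intro π hπ
    simp only [Finset.mem_filter, Finset.mem_univ, true_and] at hπ
    obtain ⟨v, hv1, hv2, σ, hσ, hins⟩ := surj hk π hπ
    refine ⟨⟨v, σ⟩, ?_, ?_⟩
    · simp only [Finset.mem_product, Finset.mem_Icc, Finset.mem_filter, Finset.mem_univ]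
      exact ⟨⟨hv1, hv2⟩, trivial, hσ⟩
    · show InsT v σ = π
      rw [InsT_eq v hv1 hv2 σ, hins]
  · rintro ⟨v, σ⟩ hp
    rfl

noncomputable def Nm (j : ℕ) : ℕ :=
  (Finset.univ.filter (fun π : Equiv.Perm (Fin (j+2)) => CmP π)).card

noncomputable def Gm (j : ℕ) : ℕ :=
  ∑ π : Equiv.Perm (Fin (j+2)), if CmP π then pv π (j+1) + 1 else 0

lemma MAIN2 (j : ℕ) : Nm (j+2) = (j+3) * Nm j := by
  have h := master (k := j+2) (by omega) (fun _ => 1)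
  have hL : ∑ π : Equiv.Perm (Fin (j+4)), (if CmP π then 1 else 0) = Nm (j+2) := by
    rw [Nm, ← Finset.sum_filter]
    simp
  have hR : ∀ v : ℕ, ∑ σ : Equiv.Perm (Fin (j+2)), (if CmP σ then 1 else 0) = Nm j := by
    intro v
    rw [Nm, ← Finset.sum_filter]
    simp
  rw [hL] at h
  rw [h]
  rw [Finset.sum_congr rfl (fun v _ => hR v), Finset.sum_const, Nat.card_Icc]
  simp [Nat.mul_comm]

lemma sum_vplus : ∀ t : ℕ, 2 * ∑ v ∈ Finset.Icc 1 t, (v + 1) = t * (t + 3)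
  | 0 => by simp
  | (t+1) => by
    rw [Finset.sum_Icc_succ_top (by omega), Nat.mul_add, sum_vplus t]
    ring

lemma MAIN3 (j : ℕ) : 2 * Gm (j+2) = Nm j * ((j+3) * (j+6)) := by
  have h := master (k := j+2) (by omega) (fun π => pv π (j+2+1) + 1)
  have hG : Gm (j+2) = ∑ π : Equiv.Perm (Fin (j+2+2)),
      if CmP π then pv π (j+2+1) + 1 else 0 := rfl
  rw [hG, h]
  have hR : ∀ v ∈ Finset.Icc 1 (j+2+1),
      ∑ σ : Equiv.Perm (Fin (j+2)), (if CmP σ then pv (InsT v σ) (j+2+1) + 1 else 0)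
        = Nm j * (v + 1) := by
    intro v hv
    rw [Finset.mem_Icc] at hv
    have : ∀ σ : Equiv.Perm (Fin (j+2)), CmP σ →
        pv (InsT v σ) (j+2+1) + 1 = v + 1 := by
      intro σ _
      rw [InsT_eq v hv.1 hv.2 σ]
      have := pv_Ins_top v hv.1 hv.2 σ
      omega
    calc ∑ σ : Equiv.Perm (Fin (j+2)), (if CmP σ then pv (InsT v σ) (j+2+1) + 1 else 0)
        = ∑ σ : Equiv.Perm (Fin (j+2)), (if CmP σ then v + 1 else 0) := by
          apply Finset.sum_congr rfl
          intro σ _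
          by_cases hσ : CmP σ
          · rw [if_pos hσ, if_pos hσ, this σ hσ]
          · rw [if_neg hσ, if_neg hσ]
      _ = Nm j * (v + 1) := by
          rw [Nm, ← Finset.sum_filter, Finset.sum_const, smul_eq_mul]
  rw [Finset.sum_congr rfl hR, ← Finset.mul_sum, Nat.mul_left_comm,
    show j+2+1 = j+3 from rfl, sum_vplus]

lemma count_le (t w : ℕ) (h : w + 1 ≤ t) :
    ∑ v ∈ Finset.Icc 1 t, (if v ≤ w + 1 then 1 else 0) = w + 1 := by
  rw [← Finset.sum_filter]
  have : (Finset.Icc 1 t).filter (fun v => v ≤ w + 1) = Finset.Icc 1 (w+1) := by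
    ext x
    simp only [Finset.mem_filter, Finset.mem_Icc]
    omega
  rw [this]
  simp [Nat.card_Icc]

/-- totOcc as a CmP-sum -/
lemma tl312_sum (m : ℕ) (hm : 2 ≤ m) :
    tl312 m hm = ∑ π : Equiv.Perm (Fin m), (if CmP π then occCount p312 π else 0) := by
  rw [tl312, totOcc]
  apply Finset.sum_congr rfl
  intro π _
  by_cases h : CmP π
  · rw [if_pos ((CmP_iff hm π).mpr h), if_pos h]
  · rw [if_neg (fun hc => h ((CmP_iff hm π).mp hc)), if_neg h]

lemma MAIN1 (j : ℕ) :
    tl312 (j+4) (by omega) = (j+3) * tl312 (j+2) (by omega) + Gm j := by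
  rw [tl312_sum (j+4) (by omega), tl312_sum (j+2) (by omega)]
  have h := master (k := j+2) (by omega) (occCount p312)
  rw [h]
  have hsplit : ∀ v ∈ Finset.Icc 1 (j+3),
      ∑ σ : Equiv.Perm (Fin (j+2)), (if CmP σ then occCount p312 (InsT v σ) else 0)
      = (∑ σ : Equiv.Perm (Fin (j+2)), (if CmP σ then occCount p312 σ else 0))
        + ∑ σ : Equiv.Perm (Fin (j+2)),
            (if CmP σ then (if v ≤ pv σ (j+1) + 1 then 1 else 0) else 0) := by
    intro v hv
    rw [Finset.mem_Icc] at hv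
    rw [← Finset.sum_add_distrib]
    apply Finset.sum_congr rfl
    intro σ _
    by_cases hσ : CmP σ
    · rw [if_pos hσ, if_pos hσ, if_pos hσ, InsT_eq v hv.1 hv.2 σ,
        occCount_Ins (by omega) v hv.1 hv.2 σ]
      have e : pv σ (j+2-1) = pv σ (j+1) := rfl
      rw [e]
    · rw [if_neg hσ, if_neg hσ, if_neg hσ]
  rw [Finset.sum_congr rfl hsplit, Finset.sum_add_distrib, Finset.sum_const,
    Nat.card_Icc, show j+3+1-1 = j+3 from rfl, smul_eq_mul]
  congr 1
  rw [Finset.sum_comm]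
  have hG : Gm j = ∑ σ : Equiv.Perm (Fin (j+2)), (if CmP σ then pv σ (j+1) + 1 else 0) :=
    rfl
  rw [hG]
  apply Finset.sum_congr rfl
  intro σ _
  by_cases hσ : CmP σ
  · simp only [if_pos hσ]
    have hlt : pv σ (j+1) + 1 ≤ j + 3 := by
      have := pv_lt σ (show j+1 < j+2 by omega)
      omega
    exact count_le (j+3) (pv σ (j+1)) hlt
  · simp only [if_neg hσ, Finset.sum_const_zero]

end Av
open Equiv Finset

namespace Av

open scoped Classical

lemma avoid_small {m : ℕ} (hm : m < 3) (π : Equiv.Perm (Fin m)) :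
    AvoidsAll [p123, p132, p321] π := by
  intro p hp i hocc
  obtain ⟨h, _⟩ := hocc
  omega

lemma perm_ext_pv {m : ℕ} (π τ : Equiv.Perm (Fin m)) (h : ∀ i, i < m → pv π i = pv τ i) :
    π = τ := by
  apply Equiv.ext
  intro x
  apply Fin.val_injective
  have := h x.val x.isLt
  rw [pv_eq π x.isLt, pv_eq τ x.isLt] at this
  simpa [Fin.eta] using this

lemma CmP2 (π : Equiv.Perm (Fin 2)) : CmP π ↔ π = 1 := by
  constructor
  · rintro ⟨_, h0⟩
    apply perm_ext_pv
    intro i hi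
    have hne := pv_ne π (show (1:ℕ) < 2 by omega) (show (0:ℕ) < 2 by omega) (by omega)
    have hπ0 : pv π 0 = 0 := h0
    have h1lt := pv_lt π (show (1:ℕ) < 2 by omega)
    have hv0 : pv (1 : Equiv.Perm (Fin 2)) 0 = 0 := by decide
    have hv1 : pv (1 : Equiv.Perm (Fin 2)) 1 = 1 := by decide
    interval_cases i <;> omega
  · rintro rfl
    exact ⟨avoid_small (by omega) 1, by decide⟩

lemma Nm0 : Nm 0 = 1 := by
  have e : Nm 0 = (Finset.univ.filter (fun π : Equiv.Perm (Fin 2) => CmP π)).card := rfl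
  rw [e]
  have : (Finset.univ.filter (fun π : Equiv.Perm (Fin 2) => CmP π)) = {1} := by
    ext π
    simp [CmP2]
  rw [this, card_singleton]

lemma CmP3 (π : Equiv.Perm (Fin 3)) : CmP π ↔ pv π 1 = 0 := by
  constructor
  · exact fun h => h.2
  · intro h0
    refine ⟨?_, h0⟩
    rw [avoids_iff]
    intro i hi
    have hieq : i = 0 := by omega
    subst hieq
    simp only [Nat.zero_add]
    have d12 := pv_ne π (show (1:ℕ) < 3 by omega) (show (2:ℕ) < 3 by omega) (by omega)
    have d01 := pv_ne π (show (0:ℕ) < 3 by omega) (show (1:ℕ) < 3 by omega) (by omega)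
    omega

noncomputable def cA : Equiv.Perm (Fin 3) := Equiv.swap 0 1
noncomputable def cB : Equiv.Perm (Fin 3) := (finRotate 3)⁻¹

lemma cA_vals : pv cA 0 = 1 ∧ pv cA 1 = 0 ∧ pv cA 2 = 2 := by
  refine ⟨?_, ?_, ?_⟩ <;> · show pv (Equiv.swap 0 1) _ = _; decide

lemma cB_vals : pv cB 0 = 2 ∧ pv cB 1 = 0 ∧ pv cB 2 = 1 := by
  refine ⟨?_, ?_, ?_⟩ <;> · show pv ((finRotate 3)⁻¹) _ = _; decide

lemma CmP3_mem (π : Equiv.Perm (Fin 3)) : CmP π ↔ (π = cA ∨ π = cB) := by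
  rw [CmP3]
  obtain ⟨a0, a1, a2⟩ := cA_vals
  obtain ⟨b0, b1, b2⟩ := cB_vals
  constructor
  · intro h0
    have d01 := pv_ne π (show (0:ℕ) < 3 by omega) (show (1:ℕ) < 3 by omega) (by omega)
    have d12 := pv_ne π (show (1:ℕ) < 3 by omega) (show (2:ℕ) < 3 by omega) (by omega)
    have d02 := pv_ne π (show (0:ℕ) < 3 by omega) (show (2:ℕ) < 3 by omega) (by omega)
    have l0 := pv_lt π (show (0:ℕ) < 3 by omega)
    have l2 := pv_lt π (show (2:ℕ) < 3 by omega)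
    by_cases hc : pv π 0 = 1
    · left
      apply perm_ext_pv
      intro i hi
      interval_cases i <;> omega
    · right
      apply perm_ext_pv
      intro i hi
      interval_cases i <;> omega
  · rintro (rfl | rfl)
    · exact a1
    · exact b1

lemma cA_ne_cB : cA ≠ cB := by
  intro h
  obtain ⟨a0, _, _⟩ := cA_vals
  obtain ⟨b0, _, _⟩ := cB_vals
  rw [h, b0] at a0
  omega

lemma filter3 : (Finset.univ.filter (fun π : Equiv.Perm (Fin 3) => CmP π)) = {cA, cB} := by
  ext π
  simp [CmP3_mem]

lemma Nm1 : Nm 1 = 2 := by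
  have e : Nm 1 = (Finset.univ.filter (fun π : Equiv.Perm (Fin 3) => CmP π)).card := rfl
  rw [e, filter3, Finset.card_pair cA_ne_cB]

lemma Gm1 : Gm 1 = 5 := by
  have e : Gm 1 = ∑ π : Equiv.Perm (Fin 3), (if CmP π then pv π 2 + 1 else 0) := rfl
  rw [e, ← Finset.sum_filter, filter3, Finset.sum_pair cA_ne_cB,
    cA_vals.2.2, cB_vals.2.2]

lemma Nm_eq : ∀ j, Nm j = Nat.doubleFactorial (j+1)
  | 0 => by rw [Nm0]; rfl
  | 1 => by rw [Nm1]; rfl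
  | (j+2) => by
    rw [MAIN2 j, Nm_eq j]
    exact (Nat.doubleFactorial_add_two (j+1)).symm

lemma KEY (j : ℕ) (h2 : 2 ≤ j+5) (h2' : 2 ≤ j+3) :
    2 * tl312 (j+5) h2 =
      2*(j+4) * tl312 (j+3) h2' + Nat.doubleFactorial j * ((j+2)*(j+5)) := by
  have h1 := MAIN1 (j+1)
  have e1 : tl312 (j+1+4) (by omega) = tl312 (j+5) h2 := rfl
  have e2 : tl312 (j+1+2) (by omega) = tl312 (j+3) h2' := rfl
  rw [e1, e2] at h1
  rcases j with _ | i
  · -- j = 0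
    rw [show (0:ℕ)+1+3 = 4 from rfl] at h1
    rw [h1]
    have eG : Gm (0+1) = 5 := Gm1
    rw [eG]
    show 2 * (4 * tl312 3 h2' + 5) = 2 * 4 * tl312 3 h2' + 1 * (2 * 5)
    omega
  · have h3 := MAIN3 i
    have h4 := Nm_eq i
    rw [h4] at h3
    have eG : Gm (i+1+1) = Gm (i+2) := rfl
    rw [eG] at h1
    rw [show i+1+1+3 = i+5 from rfl] at h1
    show 2 * tl312 (i+1+5) h2 =
      2*(i+5) * tl312 (i+1+3) h2' + Nat.doubleFactorial (i+1) * ((i+3)*(i+6))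
    calc 2 * tl312 (i+1+5) h2
        = 2 * ((i+5) * tl312 (i+1+3) h2' + Gm (i+2)) := by rw [← h1]
      _ = 2*(i+5) * tl312 (i+1+3) h2' + 2 * Gm (i+2) := by ring
      _ = 2*(i+5) * tl312 (i+1+3) h2' + Nat.doubleFactorial (i+1) * ((i+3)*(i+6)) := by
          rw [h3]

end Av
theorem stmt5 (n : ℕ) (hn : 5 ≤ n) :
    (tl312 n (by omega) : ℚ) =
      ((n : ℚ) - 1) * (tl312 (n - 2) (by omega) + (Nat.doubleFactorial (n - 3) : ℚ))
        - (Nat.doubleFactorial (n - 5) : ℚ) * (((n : ℚ) - 3) * ((n : ℚ) - 2)) / 2 := by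
  obtain ⟨j, rfl⟩ : ∃ j, n = j + 5 := ⟨n - 5, by omega⟩
  have key := Av.KEY j (by omega) (by omega)
  have hdf : Nat.doubleFactorial (j+2) = (j+2) * Nat.doubleFactorial j :=
    Nat.doubleFactorial_add_two j
  have keyQ := congrArg (fun x : ℕ => (x : ℚ)) key
  push_cast at keyQ
  have hdfQ := congrArg (fun x : ℕ => (x : ℚ)) hdf
  push_cast at hdfQ
  show (tl312 (j+5) (by omega) : ℚ) =
      (((j+5 : ℕ) : ℚ) - 1) * ((tl312 (j+3) (by omega) : ℚ)
          + (Nat.doubleFactorial (j+2) : ℚ))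
        - (Nat.doubleFactorial j : ℚ)
          * ((((j+5 : ℕ) : ℚ) - 3) * ((((j+5 : ℕ)) : ℚ) - 2)) / 2
  push_cast
  linear_combination (1/2 : ℚ) * keyQ - ((j : ℚ) + 4) * hdfQ
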